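/- For a positive integer n, the inequality cos(π/(2n)) > 1 − 2^(2−n) holds if and only if n ≤ 7. In particular, for all integers n ≥ 8 one has cos(π/(2n)) ≤ 1 − 4/2ⁿ. -/

import Mathlib

open Real

lemma key_cos_bound {x : ℝ} (hx : 0 < x) (hx2 : x ≤ 1/5) :
    Real.cos (2*x) ≤ 1 - 49/25 * x^2 := by
  have hs : x - x^3/4 < Real.sin x := by
    have := Real.sin_gt_sub_cube hx; linarith [pow_pos hx 3]
  have hxx : x^2 ≤ 1/25 := by nlinarith
  have hx3 : x^3 ≤ x/25 := by nlinarith [mul_le_mul_of_nonneg_left hxx hx.le]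
  have hs0 : (0:ℝ) < x - x^3/4 := by linarith
  have h2 : Real.cos (2*x) = 1 - 2 * Real.sin x ^ 2 := by
    rw [Real.cos_two_mul]
    nlinarith [Real.sin_sq_add_cos_sq x]
  rw [h2]
  have hsin2 : (x - x^3/4)^2 < Real.sin x ^ 2 := by
    apply pow_lt_pow_left₀ hs hs0.le
    norm_num
  nlinarith [hsin2, hxx, sq_nonneg x, mul_nonneg (sq_nonneg x) (sq_nonneg x),
    mul_le_mul_of_nonneg_left hxx (sq_nonneg x)]

lemma natlem : ∀ n : ℕ, 8 ≤ n → 10 * n^2 ≤ 3 * 2^n := by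
  intro n hn
  induction n, hn using Nat.le_induction with
  | base => norm_num
  | succ n hn ih =>
    calc 10 * (n+1)^2 ≤ 20 * n^2 := by nlinarith
    _ ≤ 2 * (3 * 2^n) := by linarith
    _ = 3 * 2^(n+1) := by ring

lemma hard (n : ℕ) (hn : 8 ≤ n) : Real.cos (π/(2*n)) ≤ 1 - 4/2^n := by
  have hn' : (8:ℝ) ≤ n := by exact_mod_cast hn
  have hn0 : (0:ℝ) < n := by linarith
  have hπ : π < 3.15 := pi_lt_d2
  have hπ0 : 3.14 < π := pi_gt_d2
  set x := π/(4*n) with hxdef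
  have hx : 0 < x := by positivity
  have hx2 : x ≤ 1/5 := by
    rw [hxdef, div_le_iff₀ (by positivity)]
    nlinarith
  have h1 : π/(2*(n:ℝ)) = 2*x := by rw [hxdef]; ring
  rw [h1]
  have h2 := key_cos_bound hx hx2
  have hp : (0:ℝ) < 2^n := by positivity
  have hnatR : (10:ℝ)*n^2 ≤ 3*2^n := by exact_mod_cast natlem n hn
  have hxsq : x^2 = π^2/(16*n^2) := by rw [hxdef]; field_simp; ring
  have hkey : 4/2^n ≤ 49/25 * x^2 := by
    have step1 : (4:ℝ)/2^n ≤ 6/(5*(n:ℝ)^2) := by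
      rw [div_le_div_iff₀ hp (by positivity)]
      nlinarith
    have step2 : 6/(5*n^2) ≤ 49/25 * x^2 := by
      rw [hxsq, div_le_iff₀ (by positivity)]
      have : 49/25 * (π^2/(16*n^2)) * (5*n^2) = 49*π^2/80 := by field_simp; ring
      rw [this]
      nlinarith
    linarith
  linarith

lemma small (n : ℕ) (h1 : 1 ≤ n) (h7 : n ≤ 7) :
    Real.cos (π/(2*n)) > 1 - 4/2^n := by
  have hπ : π < 3.15 := pi_lt_d2
  have hπ0 : 3.14 < π := pi_gt_d2
  have hb := Real.one_sub_sq_div_two_le_cos (x := π/(2*(n:ℝ)))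
  have : (π/(2*(n:ℝ)))^2/2 < 4/2^n := by
    interval_cases n <;> push_cast <;>
      rw [div_lt_div_iff₀ (by positivity) (by positivity)] <;> nlinarith
  linarith

theorem cos_threshold_nand_bound :
    (∀ n : ℕ, 1 ≤ n →
      (Real.cos (Real.pi / (2 * n)) > 1 - (2 : ℝ) ^ ((2 : ℤ) - (n : ℤ)) ↔ n ≤ 7)) ∧
    (∀ n : ℕ, 8 ≤ n →
      Real.cos (Real.pi / (2 * n)) ≤ 1 - 4 / 2 ^ n) := by
  constructor
  · intro n hn
    have hpow : (2:ℝ) ^ ((2:ℤ) - (n:ℤ)) = 4 / 2^n := by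
      rw [zpow_sub₀ (by norm_num : (2:ℝ) ≠ 0), zpow_natCast]
      norm_num
    rw [hpow]
    constructor
    · intro h
      by_contra h7
      push_neg at h7
      exact absurd h (not_lt.2 (hard n h7))
    · exact small n hn
  · exact hard
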